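/- For n ≥ 3 and m ≥ 1, κ₃(P_n ∘ K_m) = m, where P_n is the path on n vertices, K_m the complete graph on m vertices, and ∘ the lexicographic product. -/

import Mathlib

open SimpleGraph

/-- An `S`-Steiner tree in `G`: a subgraph that is a tree and contains `S`. -/
def IsSteinerTree {V : Type*} (G : SimpleGraph V) (S : Set V) (T : G.Subgraph) : Prop :=
  T.coe.IsTree ∧ S ⊆ T.verts

/-- Two `S`-trees are internally disjoint: edge-disjoint and meeting exactly in `S`. -/
def IntDisjoint {V : Type*} (S : Set V) {G : SimpleGraph V} (T₁ T₂ : G.Subgraph) : Prop :=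
  T₁.verts ∩ T₂.verts = S ∧ ∀ u v, ¬ (T₁.Adj u v ∧ T₂.Adj u v)

/-- `κ(S)`: the maximum number of pairwise internally disjoint `S`-Steiner trees. -/
noncomputable def steinerConn {V : Type*} (G : SimpleGraph V) (S : Set V) : ℕ :=
  sSup {n | ∃ f : Fin n → G.Subgraph,
    (∀ i, IsSteinerTree G S (f i)) ∧ ∀ i j, i ≠ j → IntDisjoint S (f i) (f j)}

/-- The generalized `k`-connectivity `κ_k(G)`. -/
noncomputable def genConn {V : Type*} (G : SimpleGraph V) (k : ℕ) : ℕ :=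
  sInf {c | ∃ S : Set V, S.ncard = k ∧ steinerConn G S = c}

/-- `G` is `k`-connected: more than `k` vertices, and removing fewer than `k`
vertices leaves it connected. -/
def KConnected {V : Type*} (G : SimpleGraph V) (k : ℕ) : Prop :=
  k < Nat.card V ∧ ∀ s : Set V, s.Finite → s.ncard < k → (G.induce sᶜ).Connected

/-- The vertex connectivity `κ(G)`. -/
noncomputable def vconn {V : Type*} (G : SimpleGraph V) : ℕ :=
  sSup {k | KConnected G k}

/-- The lexicographic product `G ∘ H`. -/
def lexProd {V W : Type*} (G : SimpleGraph V) (H : SimpleGraph W) : SimpleGraph (V × W) where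
  Adj a b := G.Adj a.1 b.1 ∨ (a.1 = b.1 ∧ H.Adj a.2 b.2)
  symm := by
    refine ⟨?_⟩
    intro a b h
    rcases h with h | ⟨h1, h2⟩
    · exact Or.inl h.symm
    · exact Or.inr ⟨h1.symm, h2.symm⟩
  loopless := by
    refine ⟨?_⟩
    intro a h
    rcases h with h | ⟨_, h2⟩
    · exact G.irrefl h
    · exact H.irrefl h2

/-- The star `K_{1,m}` on `m + 1` vertices: center `none`, leaves `some i`. -/
def starGraph (m : ℕ) : SimpleGraph (Option (Fin m)) where
  Adj u v := u ≠ v ∧ (u = none ∨ v = none)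
  symm := by refine ⟨?_⟩; intro u v ⟨h1, h2⟩; exact ⟨h1.symm, h2.symm⟩
  loopless := by refine ⟨?_⟩; intro u ⟨h1, _⟩; exact h1 rfl

namespace GCAux

open SimpleGraph Walk

/-- A graph admitting a strictly rank-decreasing parent function is acyclic. -/
lemma acyclic_of_parent {V : Type*} {G : SimpleGraph V} (ρ : V → ℕ) (par : V → V)
    (h : ∀ u v, G.Adj u v → (v = par u ∧ ρ v < ρ u) ∨ (u = par v ∧ ρ u < ρ v)) :
    G.IsAcyclic := by
  classical
  have key : ∀ (u : V) (c : G.Walk u u), c.IsCycle → (∀ x ∈ c.support, ρ x ≤ ρ u) → False := by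
    intro u c hc hsup
    cases c with
    | nil => exact Walk.IsCycle.not_of_nil hc
    | @cons _ b _ hadj q =>
      have hbsup : b ∈ (Walk.cons hadj q).support := by
        rw [Walk.support_cons]; exact List.mem_cons_of_mem _ q.start_mem_support
      have hnodup := hc.edges_nodup
      rw [Walk.edges_cons] at hnodup
      have hnotmem : s(u, b) ∉ q.edges := (List.nodup_cons.mp hnodup).1
      have hb : b = par u := by
        rcases h u b hadj with ⟨h1, _⟩ | ⟨_, h2⟩
        · exact h1
        · exact absurd h2 (not_lt.mpr (hsup b hbsup))
      have hub : u ≠ b := hadj.ne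
      obtain ⟨d, hud, r, hqr⟩ := Walk.exists_eq_cons_of_ne hub q.reverse
      have hdsup : d ∈ (Walk.cons hadj q).support := by
        rw [Walk.support_cons]
        have : d ∈ q.reverse.support := by
          rw [hqr, Walk.support_cons]; exact List.mem_cons_of_mem _ r.start_mem_support
        rw [Walk.support_reverse, List.mem_reverse] at this
        exact List.mem_cons_of_mem _ this
      have hd : d = par u := by
        rcases h u d hud with ⟨h1, _⟩ | ⟨_, h2⟩
        · exact h1
        · exact absurd h2 (not_lt.mpr (hsup d hdsup))
      have hedge : s(u, d) ∈ q.edges := by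
        have : s(u, d) ∈ q.reverse.edges := by
          rw [hqr, Walk.edges_cons]; exact List.mem_cons_self
        rwa [Walk.edges_reverse, List.mem_reverse] at this
      rw [show d = b from hd.trans hb.symm] at hedge
      exact hnotmem hedge
  intro v c hc
  have hne : c.support.toFinset.Nonempty := ⟨v, List.mem_toFinset.mpr c.start_mem_support⟩
  obtain ⟨u, huF, hmax⟩ := Finset.exists_max_image c.support.toFinset ρ hne
  have hu : u ∈ c.support := List.mem_toFinset.mp huF
  refine key u (c.rotate u hu) (hc.rotate hu) ?_
  intro x hx
  rw [Walk.support_eq_cons, List.mem_cons] at hx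
  rcases hx with rfl | hx
  · exact le_refl _
  · have hx' : x ∈ c.support.tail := (Walk.support_rotate c u hu).mem_iff.mp hx
    refine hmax x (List.mem_toFinset.mpr ?_)
    rw [Walk.support_eq_cons]
    exact List.mem_cons_of_mem _ hx'

/-- Four pairwise distinct elements cannot fit in a set of `ncard` 3. -/
lemma not_four {α : Type*} {S : Set α} (h3 : S.ncard = 3) {a b c d : α}
    (ha : a ∈ S) (hb : b ∈ S) (hc : c ∈ S) (hd : d ∈ S)
    (hab : a ≠ b) (hac : a ≠ c) (had : a ≠ d) (hbc : b ≠ c) (hbd : b ≠ d) (hcd : c ≠ d) :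
    False := by
  obtain ⟨p, q, r, _, _, _, rfl⟩ := Set.ncard_eq_three.mp h3
  simp only [Set.mem_insert_iff, Set.mem_singleton_iff] at ha hb hc hd
  rcases ha with rfl | rfl | rfl <;> rcases hb with rfl | rfl | rfl <;>
    rcases hc with rfl | rfl | rfl <;> rcases hd with rfl | rfl | rfl <;> simp_all

variable (n m : ℕ)

/-- The graph `P_n ∘ K_m`. -/
abbrev Gr : SimpleGraph (Fin n × Fin m) := lexProd (pathGraph n) (⊤ : SimpleGraph (Fin m))

/-- A neighbour of `i` in the path graph. -/
def nbr (i : Fin n) : Fin n :=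
  if h : i.val + 1 < n then ⟨i.val + 1, h⟩
  else ⟨i.val - 1, Nat.lt_of_le_of_lt (Nat.sub_le _ _) i.isLt⟩

lemma nbr_ne (hn2 : 2 ≤ n) (i : Fin n) : nbr n i ≠ i := by
  have hi := i.isLt
  unfold nbr
  split_ifs with h <;>
    (intro he; have hv := congrArg Fin.val he; simp only at hv; omega)

lemma nbr_adj (hn2 : 2 ≤ n) (i : Fin n) : (pathGraph n).Adj i (nbr n i) := by
  have hi := i.isLt
  rw [pathGraph_adj]
  unfold nbr
  split_ifs with h
  · left; rfl
  · right; show i.val - 1 + 1 = i.val; omega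

open Classical in
/-- The attachment point in column `x` for the vertex `s`. -/
noncomputable def target (S : Set (Fin n × Fin m)) (x : Fin m) (s : Fin n × Fin m) :
    Fin n × Fin m :=
  if ((s.1, x) : Fin n × Fin m) ∈ S then (nbr n s.1, x) else (s.1, x)

lemma target_snd (S : Set (Fin n × Fin m)) (x : Fin m) (s : Fin n × Fin m) :
    (target n m S x s).2 = x := by
  unfold target; split_ifs <;> rfl

lemma target_adj (hn2 : 2 ≤ n) (S : Set (Fin n × Fin m)) (x : Fin m) (s : Fin n × Fin m)
    (hs : s.2 ≠ x) : (Gr n m).Adj s (target n m S x s) := by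
  unfold target; split_ifs with h
  · exact Or.inl (nbr_adj n hn2 s.1)
  · exact Or.inr ⟨rfl, hs⟩

lemma target_mem (S : Set (Fin n × Fin m)) (x : Fin m) (s : Fin n × Fin m)
    (hmem : target n m S x s ∈ S) :
    ((s.1, x) : Fin n × Fin m) ∈ S ∧ ((nbr n s.1, x) : Fin n × Fin m) ∈ S := by
  unfold target at hmem; split_ifs at hmem with h
  · exact ⟨h, hmem⟩
  · exact absurd hmem h

/-- The Steiner tree in column `x`: the full column plus pendant edges to `S`. -/
noncomputable def TreeSub (hn2 : 2 ≤ n) (S : Set (Fin n × Fin m)) (x : Fin m) :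
    (Gr n m).Subgraph where
  verts := {v | v.2 = x} ∪ S
  Adj u v := (u.2 = x ∧ v.2 = x ∧ (pathGraph n).Adj u.1 v.1) ∨
    (∃ s ∈ S, s.2 ≠ x ∧ ((u = s ∧ v = target n m S x s) ∨ (v = s ∧ u = target n m S x s)))
  adj_sub := by
    rintro u v (⟨hux, hvx, hp⟩ | ⟨s, hsS, hsx, (⟨hu, hv⟩ | ⟨hv, hu⟩)⟩)
    · exact Or.inl hp
    · rw [hu, hv]; exact target_adj n m hn2 S x s hsx
    · rw [hu, hv]; exact ((target_adj n m hn2 S x s hsx).symm)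
  edge_vert := by
    rintro u v (⟨hux, _, _⟩ | ⟨s, hsS, hsx, (⟨hu, _⟩ | ⟨_, hu⟩)⟩)
    · exact Set.mem_union_left _ hux
    · rw [hu]; exact Set.mem_union_right _ hsS
    · rw [hu]; exact Set.mem_union_left _ (target_snd n m S x s)
  symm := by
    refine ⟨?_⟩
    rintro u v (⟨hux, hvx, hp⟩ | ⟨s, hsS, hsx, hc⟩)
    · exact Or.inl ⟨hvx, hux, hp.symm⟩
    · exact Or.inr ⟨s, hsS, hsx, hc.symm⟩

lemma treeSub_adj (hn2 : 2 ≤ n) (S : Set (Fin n × Fin m)) (x : Fin m)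
    (u v : Fin n × Fin m) :
    (TreeSub n m hn2 S x).Adj u v ↔
      ((u.2 = x ∧ v.2 = x ∧ (pathGraph n).Adj u.1 v.1) ∨
        (∃ s ∈ S, s.2 ≠ x ∧
          ((u = s ∧ v = target n m S x s) ∨ (v = s ∧ u = target n m S x s)))) :=
  Iff.rfl

lemma treeSub_verts (hn2 : 2 ≤ n) (S : Set (Fin n × Fin m)) (x : Fin m) :
    (TreeSub n m hn2 S x).verts = {v | v.2 = x} ∪ S :=
  rfl

lemma treeSub_isSteiner (hn2 : 2 ≤ n) (S : Set (Fin n × Fin m)) (x : Fin m) :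
    IsSteinerTree (Gr n m) S (TreeSub n m hn2 S x) := by
  have hn0 : 0 < n := by omega
  refine ⟨⟨?_, ?_⟩, fun s hs => Set.mem_union_right _ hs⟩
  · -- connected
    set T := TreeSub n m hn2 S x with hT
    have hrootmem : ((⟨0, hn0⟩, x) : Fin n × Fin m) ∈ T.verts := Set.mem_union_left _ rfl
    have col : ∀ (k : ℕ) (hk : k < n),
        T.coe.Reachable ⟨(⟨k, hk⟩, x), Set.mem_union_left _ rfl⟩ ⟨(⟨0, hn0⟩, x), hrootmem⟩ := by
      intro k
      induction k with
      | zero => intro hk; rfl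
      | succ k ih =>
        intro hk
        have hk' : k < n := by omega
        have hadj : T.coe.Adj ⟨(⟨k+1, hk⟩, x), Set.mem_union_left _ rfl⟩
            ⟨(⟨k, hk'⟩, x), Set.mem_union_left _ rfl⟩ := by
          show T.Adj _ _
          exact Or.inl ⟨rfl, rfl, by rw [pathGraph_adj]; right; rfl⟩
        exact hadj.reachable.trans (ih hk')
    have colv : ∀ (v : Fin n × Fin m) (hvx : v.2 = x),
        T.coe.Reachable ⟨v, Set.mem_union_left _ hvx⟩ ⟨(⟨0, hn0⟩, x), hrootmem⟩ := by
      rintro ⟨i, y⟩ hvx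
      have hyx : y = x := hvx
      subst hyx
      have hkey : (⟨(⟨i.val, i.isLt⟩, y), Set.mem_union_left _ rfl⟩ : T.verts)
          = ⟨(i, y), Set.mem_union_left _ hvx⟩ := by
        apply Subtype.ext; simp
      rw [← hkey]
      exact col i.val i.isLt
    have reach : ∀ v : T.verts, T.coe.Reachable v ⟨(⟨0, hn0⟩, x), hrootmem⟩ := by
      rintro ⟨v, hv⟩
      by_cases hvx : v.2 = x
      · have : (⟨v, hv⟩ : T.verts) = ⟨v, Set.mem_union_left _ hvx⟩ := rfl
        rw [this]; exact colv v hvx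
      · have hvS : v ∈ S := hv.resolve_left hvx
        have hadj : T.coe.Adj ⟨v, hv⟩
            ⟨target n m S x v, Set.mem_union_left _ (target_snd n m S x v)⟩ := by
          show T.Adj _ _
          exact Or.inr ⟨v, hvS, hvx, Or.inl ⟨rfl, rfl⟩⟩
        exact hadj.reachable.trans (colv _ (target_snd n m S x v))
    have hne : Nonempty T.verts := ⟨⟨(⟨0, hn0⟩, x), hrootmem⟩⟩
    exact ⟨fun u v => (reach u).trans (reach v).symm⟩
  · -- acyclic
    apply acyclic_of_parent
      (ρ := fun v => if v.1.2 = x then v.1.1.val else n + 1)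
      (par := fun v => if hvx : v.1.2 = x then
          ⟨(⟨v.1.1.val - 1, Nat.lt_of_le_of_lt (Nat.sub_le _ _) v.1.1.isLt⟩, x),
            Set.mem_union_left _ rfl⟩
        else ⟨target n m S x v.1, Set.mem_union_left _ (target_snd n m S x v.1)⟩)
    intro u v hadj
    have hadj' : (TreeSub n m hn2 S x).Adj u.1 v.1 := hadj
    rcases hadj' with ⟨hux, hvx, hp⟩ | ⟨s, hsS, hsx, (⟨hu, hv⟩ | ⟨hv, hu⟩)⟩
    · rw [pathGraph_adj] at hp
      rcases hp with hlt | hlt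
      · right
        constructor
        · rw [dif_pos hvx]
          apply Subtype.ext
          apply Prod.ext
          · apply Fin.ext; simp; omega
          · exact hux
        · rw [if_pos hux, if_pos hvx]; omega
      · left
        constructor
        · rw [dif_pos hux]
          apply Subtype.ext
          apply Prod.ext
          · apply Fin.ext; simp; omega
          · exact hvx
        · rw [if_pos hux, if_pos hvx]; omega
    · -- u = s (pendant), v = target
      have hunx : ¬ u.1.2 = x := by rw [hu]; exact hsx
      have hvtx : v.1.2 = x := by rw [hv]; exact target_snd n m S x s
      left
      constructor
      · rw [dif_neg hunx]
        apply Subtype.ext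
        rw [hu, hv]
      · rw [if_pos hvtx, if_neg hunx]
        have := v.1.1.isLt; omega
    · -- v = s (pendant), u = target
      have hvnx : ¬ v.1.2 = x := by rw [hv]; exact hsx
      have hutx : u.1.2 = x := by rw [hu]; exact target_snd n m S x s
      right
      constructor
      · rw [dif_neg hvnx]
        apply Subtype.ext
        rw [hu, hv]
      · rw [if_pos hutx, if_neg hvnx]
        have := u.1.1.isLt; omega

lemma treeSub_disj (hn2 : 2 ≤ n) (S : Set (Fin n × Fin m)) (hS : S.ncard = 3)
    {x y : Fin m} (hxy : x ≠ y) :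
    IntDisjoint S (TreeSub n m hn2 S x) (TreeSub n m hn2 S y) := by
  constructor
  · ext v
    rw [Set.mem_inter_iff, treeSub_verts, treeSub_verts]
    simp only [Set.mem_union, Set.mem_setOf_eq]
    constructor
    · rintro ⟨h1 | h1, h2 | h2⟩
      · exact absurd (h1.symm.trans h2) hxy
      · exact h2
      · exact h1
      · exact h1
    · intro h; exact ⟨Or.inr h, Or.inr h⟩
  · rintro u v ⟨hx, hy⟩
    rw [treeSub_adj] at hx hy
    rcases hx with ⟨hux, hvx, _⟩ | ⟨s, hsS, hsx, hcx⟩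
    · rcases hy with ⟨huy, _, _⟩ | ⟨s', hs'S, hs'y, hcy⟩
      · exact hxy (hux.symm.trans huy)
      · rcases hcy with ⟨hu, hv⟩ | ⟨hv, hu⟩
        · -- v = target y s' has snd = y, but hvx : v.2 = x
          have := target_snd n m S y s'
          rw [← hv] at this
          exact hxy (hvx.symm.trans this)
        · have := target_snd n m S y s'
          rw [← hu] at this
          exact hxy (hux.symm.trans this)
    · rcases hy with ⟨huy, hvy, _⟩ | ⟨s', hs'S, hs'y, hcy⟩
      · rcases hcx with ⟨hu, hv⟩ | ⟨hv, hu⟩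
        · have := target_snd n m S x s
          rw [← hv] at this
          exact hxy (this.symm.trans hvy)
        · have := target_snd n m S x s
          rw [← hu] at this
          exact hxy (this.symm.trans huy)
      · -- both pendants
        rcases hcx with ⟨hu1, hv1⟩ | ⟨hv1, hu1⟩ <;> rcases hcy with ⟨hu2, hv2⟩ | ⟨hv2, hu2⟩
        · -- u = s = s', v = target x s = target y s'
          have h1 := target_snd n m S x s
          have h2 := target_snd n m S y s'
          rw [← hv1] at h1; rw [← hv2] at h2
          exact hxy (h1.symm.trans h2)
        · -- u = s, v = target x s ; v = s', u = target y s'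
          have hts : target n m S y s' ∈ S := by rw [← hu2, hu1]; exact hsS
          have hts' : target n m S x s ∈ S := by rw [← hv1, hv2]; exact hs'S
          obtain ⟨ha1, ha2⟩ := target_mem n m S x s hts'
          obtain ⟨hb1, hb2⟩ := target_mem n m S y s' hts
          refine not_four hS ha1 ha2 hb1 hb2 ?_ ?_ ?_ ?_ ?_ ?_
          · intro he
            exact nbr_ne n hn2 s.1 (congrArg Prod.fst he).symm
          · intro he; exact hxy (congrArg Prod.snd he)
          · intro he; exact hxy (congrArg Prod.snd he)
          · intro he; exact hxy (congrArg Prod.snd he)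
          · intro he; exact hxy (congrArg Prod.snd he)
          · intro he
            exact nbr_ne n hn2 s'.1 (congrArg Prod.fst he).symm
        · -- v = s, u = target x s ; u = s', v = target y s'
          have hts : target n m S y s' ∈ S := by rw [← hv2, hv1]; exact hsS
          have hts' : target n m S x s ∈ S := by rw [← hu1, hu2]; exact hs'S
          obtain ⟨ha1, ha2⟩ := target_mem n m S x s hts'
          obtain ⟨hb1, hb2⟩ := target_mem n m S y s' hts
          refine not_four hS ha1 ha2 hb1 hb2 ?_ ?_ ?_ ?_ ?_ ?_
          · intro he
            exact nbr_ne n hn2 s.1 (congrArg Prod.fst he).symm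
          · intro he; exact hxy (congrArg Prod.snd he)
          · intro he; exact hxy (congrArg Prod.snd he)
          · intro he; exact hxy (congrArg Prod.snd he)
          · intro he; exact hxy (congrArg Prod.snd he)
          · intro he
            exact nbr_ne n hn2 s'.1 (congrArg Prod.fst he).symm
        · -- u = target x s = target y s'
          have h1 := target_snd n m S x s
          have h2 := target_snd n m S y s'
          rw [← hu1] at h1; rw [← hu2] at h2
          exact hxy (h1.symm.trans h2)

lemma steiner_bdd (S : Set (Fin n × Fin m)) (hS : S.ncard = 3) :
    BddAbove {k | ∃ f : Fin k → (Gr n m).Subgraph,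
      (∀ i, IsSteinerTree (Gr n m) S (f i)) ∧ ∀ i j, i ≠ j → IntDisjoint S (f i) (f j)} := by
  obtain ⟨a, b, c, hab, _, _, rfl⟩ := Set.ncard_eq_three.mp hS
  refine ⟨Fintype.card (Sym2 (Fin n × Fin m)), ?_⟩
  rintro k ⟨f, ht, hd⟩
  have hedge : ∀ i : Fin k, ∃ p : (Fin n × Fin m) × (Fin n × Fin m), (f i).Adj p.1 p.2 := by
    intro i
    have hav : a ∈ (f i).verts := (ht i).2 (by simp)
    have hbv : b ∈ (f i).verts := (ht i).2 (by simp)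
    have hne : (⟨a, hav⟩ : (f i).verts) ≠ ⟨b, hbv⟩ := by
      simp only [ne_eq, Subtype.mk.injEq]; exact hab
    obtain ⟨p⟩ := (ht i).1.isConnected.preconnected ⟨a, hav⟩ ⟨b, hbv⟩
    obtain ⟨w, hadj, _, _⟩ := Walk.exists_eq_cons_of_ne hne p
    exact ⟨(a, w.1), hadj⟩
  choose e he using hedge
  have hinj : Function.Injective (fun i => s((e i).1, (e i).2)) := by
    intro i j hij
    by_contra hne
    refine (hd i j hne).2 (e i).1 (e i).2 ⟨he i, ?_⟩
    simp only [Sym2.eq_iff] at hij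
    rcases hij with ⟨h1, h2⟩ | ⟨h1, h2⟩
    · rw [h1, h2]; exact he j
    · rw [h1, h2]; exact (he j).symm
  calc k = Fintype.card (Fin k) := (Fintype.card_fin k).symm
    _ ≤ _ := Fintype.card_le_of_injective _ hinj

lemma steiner_lb (hn2 : 2 ≤ n) (S : Set (Fin n × Fin m)) (hS : S.ncard = 3) :
    m ≤ steinerConn (Gr n m) S := by
  apply le_csSup (steiner_bdd n m S hS)
  exact ⟨fun x => TreeSub n m hn2 S x, fun x => treeSub_isSteiner n m hn2 S x,
    fun x y hxy => treeSub_disj n m hn2 S hS hxy⟩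

lemma exists_layer_one {T : (Gr n m).Subgraph} {u w : T.verts} (p : T.coe.Walk u w) :
    u.1.1.val ≤ 1 → 1 ≤ w.1.1.val → ∃ z ∈ T.verts, z.1.val = 1 := by
  induction p with
  | nil =>
    rename_i a
    intro hu hw
    exact ⟨a.1, a.2, le_antisymm hu hw⟩
  | @cons u' b _ h q ih =>
    intro hu hw
    by_cases h1 : u'.1.1.val = 1
    · exact ⟨u'.1, u'.2, h1⟩
    · refine ih ?_ hw
      have hadj : (Gr n m).Adj u'.1 b.1 := T.adj_sub h
      rcases hadj with hp | ⟨he, _⟩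
      · rw [pathGraph_adj] at hp; omega
      · have := congrArg Fin.val he; omega

lemma ub_m2 (hn : 3 ≤ n) (hm2 : 2 ≤ m) :
    ∃ S : Set (Fin n × Fin m), S.ncard = 3 ∧ steinerConn (Gr n m) S = m := by
  have hn2 : 2 ≤ n := by omega
  refine ⟨{(⟨0, by omega⟩, ⟨0, by omega⟩), (⟨2, by omega⟩, ⟨0, by omega⟩),
    (⟨2, by omega⟩, ⟨1, by omega⟩)}, ?_, ?_⟩
  case refine_1 =>
    refine Set.ncard_eq_three.mpr ⟨_, _, _, ?_, ?_, ?_, rfl⟩ <;>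
      simp [Prod.ext_iff, Fin.ext_iff]
  case refine_2 =>
    have h3 : ({(⟨0, by omega⟩, ⟨0, by omega⟩), (⟨2, by omega⟩, ⟨0, by omega⟩),
        (⟨2, by omega⟩, ⟨1, by omega⟩)} : Set (Fin n × Fin m)).ncard = 3 := by
      refine Set.ncard_eq_three.mpr ⟨_, _, _, ?_, ?_, ?_, rfl⟩ <;>
        simp [Prod.ext_iff, Fin.ext_iff]
    apply le_antisymm
    · apply csSup_le
      · exact ⟨0, Fin.elim0, fun i => i.elim0, fun i => i.elim0⟩
      · rintro k ⟨f, ht, hd⟩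
        have hz : ∀ i : Fin k, ∃ z, z ∈ (f i).verts ∧ z.1.val = 1 := by
          intro i
          have hav : ((⟨0, by omega⟩, ⟨0, by omega⟩) : Fin n × Fin m) ∈ (f i).verts :=
            (ht i).2 (by simp)
          have hbv : ((⟨2, by omega⟩, ⟨0, by omega⟩) : Fin n × Fin m) ∈ (f i).verts :=
            (ht i).2 (by simp)
          obtain ⟨p⟩ := (ht i).1.isConnected.preconnected ⟨_, hav⟩ ⟨_, hbv⟩
          exact exists_layer_one n m p (by simp) (by simp)
        choose z hz1 hz2 using hz
        have hinj : Function.Injective (fun i => (z i).2) := by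
          intro i j hij
          by_contra hne
          have hzz : z i = z j := by
            refine Prod.ext (Fin.ext ?_) hij
            rw [hz2 i, hz2 j]
          have hmem : z i ∈ (f i).verts ∩ (f j).verts := ⟨hz1 i, hzz ▸ hz1 j⟩
          rw [(hd i j hne).1] at hmem
          simp only [Set.mem_insert_iff, Set.mem_singleton_iff] at hmem
          have h2 := hz2 i
          rcases hmem with h | h | h <;> (rw [h] at h2; simp at h2)
        calc k = Fintype.card (Fin k) := (Fintype.card_fin k).symm
          _ ≤ Fintype.card (Fin m) := Fintype.card_le_of_injective _ hinj
          _ = m := Fintype.card_fin m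
    · exact steiner_lb n m hn2 _ h3

lemma ub_m1 (hn : 3 ≤ n) :
    ∃ S : Set (Fin n × Fin 1), S.ncard = 3 ∧ steinerConn (Gr n 1) S = 1 := by
  have hn2 : 2 ≤ n := by omega
  refine ⟨{(⟨0, by omega⟩, 0), (⟨1, by omega⟩, 0), (⟨2, by omega⟩, 0)}, ?_, ?_⟩
  case refine_1 =>
    refine Set.ncard_eq_three.mpr ⟨_, _, _, ?_, ?_, ?_, rfl⟩ <;>
      simp [Prod.ext_iff, Fin.ext_iff]
  case refine_2 =>
    have h3 : ({(⟨0, by omega⟩, 0), (⟨1, by omega⟩, 0),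
        (⟨2, by omega⟩, 0)} : Set (Fin n × Fin 1)).ncard = 3 := by
      refine Set.ncard_eq_three.mpr ⟨_, _, _, ?_, ?_, ?_, rfl⟩ <;>
        simp [Prod.ext_iff, Fin.ext_iff]
    apply le_antisymm
    · apply csSup_le
      · exact ⟨0, Fin.elim0, fun i => i.elim0, fun i => i.elim0⟩
      · rintro k ⟨f, ht, hd⟩
        by_contra hk
        push_neg at hk
        have claim : ∀ i : Fin k,
            (f i).Adj (⟨0, by omega⟩, 0) (⟨1, by omega⟩, 0) := by
          intro i
          have hav : ((⟨0, by omega⟩, 0) : Fin n × Fin 1) ∈ (f i).verts :=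
            (ht i).2 (by simp)
          have hbv : ((⟨1, by omega⟩, 0) : Fin n × Fin 1) ∈ (f i).verts :=
            (ht i).2 (by simp)
          have hne : (⟨_, hav⟩ : (f i).verts) ≠ ⟨_, hbv⟩ := by
            simp [Subtype.ext_iff, Prod.ext_iff, Fin.ext_iff]
          obtain ⟨p⟩ := (ht i).1.isConnected.preconnected ⟨_, hav⟩ ⟨_, hbv⟩
          obtain ⟨w, hadj, _, _⟩ := Walk.exists_eq_cons_of_ne hne p
          have hG : (Gr n 1).Adj (⟨0, by omega⟩, 0) w.1 := (f i).adj_sub hadj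
          have hwb : w.1 = ((⟨1, by omega⟩, 0) : Fin n × Fin 1) := by
            rcases hG with hp | ⟨_, htop⟩
            · rw [pathGraph_adj] at hp
              simp only at hp
              refine Prod.ext (Fin.ext ?_) (Subsingleton.elim _ _)
              show _ = (1 : ℕ)
              omega
            · exact absurd (Subsingleton.elim _ _) htop.ne
          have hadj' : (f i).Adj ((⟨0, by omega⟩, 0) : Fin n × Fin 1) w.1 := hadj
          rwa [hwb] at hadj'
        have hne01 : (⟨0, by omega⟩ : Fin k) ≠ ⟨1, by omega⟩ := by
          simp [Fin.ext_iff]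
        exact (hd _ _ hne01).2 _ _ ⟨claim ⟨0, by omega⟩, claim ⟨1, by omega⟩⟩
    · exact steiner_lb n 1 hn2 _ h3

end GCAux

/-- `κ₃(P_n ∘ K_m) = m` for `n ≥ 3`, `m ≥ 1`. -/
theorem genConn_three_path_lexProd_complete (n m : ℕ) (hn : 3 ≤ n) (hm : 1 ≤ m) :
    genConn (lexProd (pathGraph n) (⊤ : SimpleGraph (Fin m))) 3 = m := by
  have hn2 : 2 ≤ n := by omega
  have hmem : ∃ S : Set (Fin n × Fin m), S.ncard = 3 ∧
      steinerConn (lexProd (pathGraph n) (⊤ : SimpleGraph (Fin m))) S = m := by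
    rcases Nat.lt_or_ge m 2 with h | h
    · have hm1 : m = 1 := by omega
      subst hm1
      exact GCAux.ub_m1 n hn
    · exact GCAux.ub_m2 n m hn h
  unfold genConn
  apply le_antisymm
  · obtain ⟨S, h1, h2⟩ := hmem
    exact Nat.sInf_le ⟨S, h1, h2⟩
  · apply le_csInf
    · obtain ⟨S, h1, h2⟩ := hmem
      exact ⟨m, S, h1, h2⟩
    · rintro c ⟨S, h1, rfl⟩
      exact GCAux.steiner_lb n m hn2 S h1
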